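/- Let G be a countable group acting freely and measure-class-preservingly on a standard probability space (X,m), with Radon–Nikodym derivatives r_g(x) = d(gm)/dm(x). If for a.e. x in a G-invariant set A the set M_x of g ∈ G maximizing r_{g^{-1}}(x)·(normalization at x) — i.e., the set of maximal-weight atoms of the orbit measure μ_x(gx) = d(g^{-1}m)/dm(x) — is nonempty and finite, then A admits a measurable G-orbit selection (a measurable map π : A → A constant on orbits with π(x) ∈ Gx), and hence A is contained in the dissipative part. -/

import Mathlib

open MeasureTheory Pointwise
open scoped ENNReal

/-- If for a.e. `x` in a `G`-invariant set `A` the set `M_x` of maximal-weight atoms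
of the orbit measure `μ_x(g • x) = r g⁻¹ x` is nonempty and finite, then `A` admits a
measurable orbit selection and is contained mod 0 in the dissipative part (the union
of translates of a wandering set). -/
theorem stmt_15 {G X : Type*} [Group G] [Countable G] [MeasurableSpace X]
    [StandardBorelSpace X] [MulAction G X]
    (μ : Measure X) [IsProbabilityMeasure μ]
    (hmeas : ∀ g : G, Measurable (fun x : X => g • x))
    (hfree : ∀ᵐ x ∂μ, ∀ g : G, g • x = x → g = 1)
    (r : G → X → ℝ≥0∞) (hr : ∀ g : G, Measurable (r g))
    (hrn : ∀ g : G, μ.map (fun x : X => g • x) = μ.withDensity (r g))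
    (A : Set X) (hA : MeasurableSet A)
    (hAinv : ∀ g : G, (fun x : X => g • x) '' A = A)
    (hmax : ∀ᵐ x ∂μ, x ∈ A →
      {g : G | ∀ h : G, r h⁻¹ x ≤ r g⁻¹ x}.Nonempty ∧
      {g : G | ∀ h : G, r h⁻¹ x ≤ r g⁻¹ x}.Finite) :
    (∃ π : X → X, Measurable π ∧
        (∀ g : G, ∀ᵐ x ∂μ, x ∈ A → π (g • x) = π x) ∧
        (∀ᵐ x ∂μ, x ∈ A → π x ∈ MulAction.orbit G x)) ∧
    (∃ W : Set X, MeasurableSet W ∧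
        (∀ g h : G, g ≠ h → μ ((g • W) ∩ (h • W)) = 0) ∧
        μ (A \ ⋃ g : G, g • W) = 0) := by
  classical
  -- notation for the maximizer set
  set S : X → Set G := fun x => {g : G | ∀ h : G, r h⁻¹ x ≤ r g⁻¹ x} with hSdef
  -- total mass of the densities
  have hint : ∀ g : G, ∫⁻ x, r g x ∂μ = 1 := by
    intro g
    have : (μ.withDensity (r g)) Set.univ = 1 := by
      rw [← hrn g, Measure.map_apply (hmeas g) MeasurableSet.univ]
      simp
    rwa [withDensity_apply _ MeasurableSet.univ, setLIntegral_univ] at this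
  -- pushforward of a withDensity under the (bijective, bi-measurable) action map
  have hpush : ∀ (a : G) (ρ : X → ℝ≥0∞), Measurable ρ →
      (μ.withDensity ρ).map (fun x => a • x)
        = (μ.map (fun x => a • x)).withDensity (fun y => ρ (a⁻¹ • y)) := by
    intro a ρ hρ
    have hfm : Measurable fun y : X => ρ (a⁻¹ • y) := hρ.comp (hmeas a⁻¹)
    ext s hs
    rw [Measure.map_apply (hmeas a) hs, withDensity_apply _ ((hmeas a) hs),
        withDensity_apply _ hs, setLIntegral_map hs hfm (hmeas a)]
    simp [inv_smul_smul]
  -- the cocycle identity, a.e.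
  have hcoc : ∀ a b : G, r (a * b) =ᵐ[μ] fun x => r a x * r b (a⁻¹ • x) := by
    intro a b
    have hcomp : μ.map (fun x : X => (a * b) • x)
        = (μ.map (fun x : X => b • x)).map (fun x : X => a • x) := by
      rw [Measure.map_map (hmeas a) (hmeas b)]
      congr 1
      funext x
      simp [mul_smul]
    have h1 : μ.withDensity (r (a * b))
        = μ.withDensity (fun x => r a x * r b (a⁻¹ • x)) := by
      have hgm : Measurable fun y : X => r b (a⁻¹ • y) := (hr b).comp (hmeas a⁻¹)
      rw [← hrn, hcomp, hrn b, hpush a _ (hr b), hrn a,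
          ← withDensity_mul μ (hr a) hgm]
      rfl
    have hm2 : Measurable fun x => r a x * r b (a⁻¹ • x) :=
      (hr a).mul ((hr b).comp (hmeas a⁻¹))
    exact (withDensity_eq_iff (hr _).aemeasurable hm2.aemeasurable
      (by rw [hint]; exact ENNReal.one_ne_top)).mp h1
  -- r 1 = 1 a.e.
  have hone : r 1 =ᵐ[μ] 1 := by
    have h1 : μ.withDensity (r 1) = μ.withDensity 1 := by
      rw [← hrn, withDensity_one]
      have : (fun x : X => (1 : G) • x) = id := by funext x; simp
      rw [this, Measure.map_id]
    exact (withDensity_eq_iff (hr _).aemeasurable aemeasurable_const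
      (by rw [hint]; exact ENNReal.one_ne_top)).mp h1
  -- positivity and finiteness of the densities, a.e.
  have hpos : ∀ g : G, ∀ᵐ x ∂μ, r g x ≠ 0 ∧ r g x ≠ ∞ := by
    intro g
    filter_upwards [hcoc g g⁻¹, hone] with x hx h1
    have : r g x * r g⁻¹ (g⁻¹ • x) = 1 := by
      rw [← hx]; simp only [mul_inv_cancel] at *; rw [h1]; rfl
    constructor
    · intro h0
      rw [h0, zero_mul] at this
      exact zero_ne_one this
    · intro htop
      rcases eq_or_ne (r g⁻¹ (g⁻¹ • x)) 0 with h0 | h0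
      · rw [htop, h0, mul_zero] at this; exact zero_ne_one this
      · rw [htop, ENNReal.top_mul h0] at this
        exact (ENNReal.top_ne_one) this
  -- the combined pointwise "good" condition holds a.e.
  have hQ : ∀ᵐ x ∂μ, (∀ g : G, g • x = x → g = 1)
      ∧ (∀ g h : G, r (g⁻¹ * h⁻¹) x = r g⁻¹ x * r h⁻¹ (g • x))
      ∧ (∀ g : G, r g⁻¹ x ≠ 0 ∧ r g⁻¹ x ≠ ∞)
      ∧ (x ∈ A → (S x).Nonempty ∧ (S x).Finite) := by
    have hc : ∀ᵐ x ∂μ, ∀ g h : G, r (g⁻¹ * h⁻¹) x = r g⁻¹ x * r h⁻¹ (g • x) := by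
      rw [ae_all_iff]
      intro g
      rw [ae_all_iff]
      intro h
      filter_upwards [hcoc g⁻¹ h⁻¹] with x hx
      simpa [inv_inv] using hx
    have hp : ∀ᵐ x ∂μ, ∀ g : G, r g⁻¹ x ≠ 0 ∧ r g⁻¹ x ≠ ∞ := by
      rw [ae_all_iff]; exact fun g => hpos g⁻¹
    filter_upwards [hfree, hc, hp, hmax] with x h1 h2 h3 h4
    exact ⟨h1, h2, h3, h4⟩
  -- a measurable, conull, G-invariant "good" set Ω
  obtain ⟨B, hBsub, hBmeas, hBnull⟩ := exists_measurable_superset_of_null (ae_iff.mp hQ)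
  set Ω₀ : Set X := Bᶜ with hΩ₀def
  have hΩ₀meas : MeasurableSet Ω₀ := hBmeas.compl
  have hΩ₀good : ∀ x ∈ Ω₀, (∀ g : G, g • x = x → g = 1)
      ∧ (∀ g h : G, r (g⁻¹ * h⁻¹) x = r g⁻¹ x * r h⁻¹ (g • x))
      ∧ (∀ g : G, r g⁻¹ x ≠ 0 ∧ r g⁻¹ x ≠ ∞)
      ∧ (x ∈ A → (S x).Nonempty ∧ (S x).Finite) := by
    intro x hx
    by_contra hcon
    exact hx (hBsub hcon)
  set Ω : Set X := ⋂ g : G, (fun x : X => g • x) ⁻¹' Ω₀ with hΩdef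
  have hΩmeas : MeasurableSet Ω := MeasurableSet.iInter fun g => (hmeas g) hΩ₀meas
  have hΩnull : μ Ωᶜ = 0 := by
    rw [hΩdef, Set.compl_iInter]
    refine measure_iUnion_null fun g => ?_
    have : (fun x : X => g • x) ⁻¹' Ω₀ᶜ = ((fun x : X => g • x) ⁻¹' Ω₀)ᶜ := rfl
    rw [← this, ← Measure.map_apply (hmeas g) hΩ₀meas.compl, hrn g,
        withDensity_apply _ hΩ₀meas.compl]
    exact setLIntegral_measure_zero _ _ (by rwa [compl_compl])
  have hΩinv : ∀ (g : G), ∀ x ∈ Ω, g • x ∈ Ω := by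
    intro g x hx
    rw [hΩdef, Set.mem_iInter]
    intro k
    have := Set.mem_iInter.mp hx (k * g)
    simpa [mul_smul] using this
  have hΩgood : ∀ x ∈ Ω, (∀ g : G, g • x = x → g = 1)
      ∧ (∀ g h : G, r (g⁻¹ * h⁻¹) x = r g⁻¹ x * r h⁻¹ (g • x))
      ∧ (∀ g : G, r g⁻¹ x ≠ 0 ∧ r g⁻¹ x ≠ ∞)
      ∧ (x ∈ A → (S x).Nonempty ∧ (S x).Finite) := by
    intro x hx
    refine hΩ₀good x ?_
    have := Set.mem_iInter.mp hx 1
    simpa using this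
  have hΩae : ∀ᵐ x ∂μ, x ∈ Ω := by
    rw [ae_iff]
    simpa [Set.compl_def] using hΩnull
  -- membership in A is preserved by the action
  have hAmem : ∀ (g : G) (x : X), x ∈ A → g • x ∈ A := by
    intro g x hx
    have : g • x ∈ (fun x : X => g • x) '' A := ⟨x, hx, rfl⟩
    rwa [hAinv g] at this
  -- covariance of the maximizer set
  have hS_cov : ∀ x ∈ Ω, ∀ g k : G, (k ∈ S (g • x) ↔ k * g ∈ S x) := by
    intro x hx g k
    obtain ⟨-, hcoc', hpos', -⟩ := hΩgood x hx
    have key : ∀ j : G, r (j * g)⁻¹ x = r g⁻¹ x * r j⁻¹ (g • x) := by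
      intro j
      rw [mul_inv_rev]
      exact hcoc' g j
    have hc0 := (hpos' g).1
    have hctop := (hpos' g).2
    have hle : ∀ j k' : G, (r j⁻¹ (g • x) ≤ r k'⁻¹ (g • x) ↔ r (j * g)⁻¹ x ≤ r (k' * g)⁻¹ x) := by
      intro j k'
      rw [key, key, ENNReal.mul_le_mul_iff_right hc0 hctop]
    constructor
    · intro hk h
      have h1 := hk (h * g⁻¹)
      have h2 := (hle (h * g⁻¹) k).mp h1
      simpa [inv_mul_cancel_right] using h2
    · intro hk j
      exact (hle j k).mpr (hk (j * g))
  -- a measurable injection into ℝ≥0∞ used to pick minimal representatives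
  obtain ⟨f, hf⟩ := exists_measurableEmbedding_real (α := X)
  set φ : X → ℝ≥0∞ := fun y => ENNReal.ofReal (Real.arctan (f y) + 2) with hφdef
  have harct : ∀ t : ℝ, 0 ≤ Real.arctan t + 2 := by
    intro t
    have h1 : -(Real.pi / 2) < Real.arctan t := Real.neg_pi_div_two_lt_arctan t
    have h2 : Real.pi ≤ 4 := Real.pi_le_four
    linarith
  have hφmeas : Measurable φ :=
    ENNReal.measurable_ofReal.comp ((Real.continuous_arctan.measurable.comp hf.measurable).add_const 2)
  have hφinj : Function.Injective φ := by
    intro y y' hyy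
    rw [hφdef] at hyy
    simp only at hyy
    rw [ENNReal.ofReal_eq_ofReal_iff (harct _) (harct _)] at hyy
    have : Real.arctan (f y) = Real.arctan (f y') := by linarith
    exact hf.injective (Real.arctan_injective this)
  have hφtop : ∀ y, φ y ≠ ∞ := fun y => ENNReal.ofReal_ne_top
  -- selection function data
  set F : X → G → ℝ≥0∞ := fun x g => if g ∈ S x then φ (g • x) else ∞ with hFdef
  set m : X → ℝ≥0∞ := fun x => ⨅ g : G, F x g with hmdef
  have hSmeas : ∀ g : G, MeasurableSet {x | g ∈ S x} := by
    intro g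
    have : {x | g ∈ S x} = ⋂ h : G, {x | r h⁻¹ x ≤ r g⁻¹ x} := by
      ext x; simp [hSdef, Set.mem_iInter]
    rw [this]
    exact MeasurableSet.iInter fun h => measurableSet_le (hr h⁻¹) (hr g⁻¹)
  have hFmeas : ∀ g : G, Measurable fun x => F x g := by
    intro g
    exact Measurable.ite (hSmeas g) (hφmeas.comp (hmeas g)) measurable_const
  have hmmeas : Measurable m := Measurable.iInf hFmeas
  -- attainment of the minimum on a nonempty finite maximizer set
  have hatt : ∀ x : X, (S x).Nonempty → (S x).Finite → ∃ g ∈ S x, F x g = m x ∧ m x ≠ ∞ := by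
    intro x hne hfin
    obtain ⟨g₀, hg₀, hmin⟩ := Set.exists_min_image (S x) (F x) hfin hne
    have hm : m x = F x g₀ := by
      refine le_antisymm (iInf_le _ _) (le_iInf fun g => ?_)
      by_cases hg : g ∈ S x
      · exact hmin g hg
      · rw [hFdef]; simp only [if_neg hg]; exact le_top
    have hne' : F x g₀ ≠ ∞ := by
      rw [hFdef]; simp only [if_pos hg₀]; exact hφtop _
    exact ⟨g₀, hg₀, hm.symm, by rw [hm]; exact hne'⟩
  -- uniqueness of the minimizing point
  have huniq : ∀ x : X, (∀ g : G, g • x = x → g = 1) → ∀ g g' : G,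
      F x g = m x → F x g' = m x → m x ≠ ∞ → g = g' := by
    intro x hfr g g' hg hg' hmtop
    have hgS : g ∈ S x := by
      by_contra h
      rw [hFdef] at hg; simp only [if_neg h] at hg
      exact hmtop hg.symm
    have hg'S : g' ∈ S x := by
      by_contra h
      rw [hFdef] at hg'; simp only [if_neg h] at hg'
      exact hmtop hg'.symm
    have : φ (g • x) = φ (g' • x) := by
      have h1 : F x g = F x g' := hg.trans hg'.symm
      rw [hFdef] at h1; simpa [if_pos hgS, if_pos hg'S] using h1
    have hpt : g • x = g' • x := hφinj this
    have : (g'⁻¹ * g) • x = x := by rw [mul_smul, hpt, inv_smul_smul]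
    have h1 := hfr _ this
    have := inv_mul_eq_one.mp h1
    exact this.symm
  -- covariance of F and m
  have hF_cov : ∀ x ∈ Ω, ∀ g k : G, F (g • x) k = F x (k * g) := by
    intro x hx g k
    by_cases hk : k ∈ S (g • x)
    · rw [hFdef]
      simp only [if_pos hk, if_pos ((hS_cov x hx g k).mp hk)]
      rw [← mul_smul]
    · rw [hFdef]
      simp only [if_neg hk, if_neg (fun h => hk ((hS_cov x hx g k).mpr h))]
  have hm_cov : ∀ x ∈ Ω, ∀ g : G, m (g • x) = m x := by
    intro x hx g
    rw [hmdef]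
    simp only
    rw [iInf_congr (fun k => hF_cov x hx g k)]
    exact Equiv.iInf_comp (g := F x) (Equiv.mulRight g)
  -- enumeration of the group
  obtain ⟨e, he⟩ := exists_surjective_nat G
  set P : ℕ → X → Prop := fun n x => F x (e n) = m x ∧ m x ≠ ∞ with hPdef
  set p : ℕ → X → Prop := fun n x => P n x ∨ (n = 0 ∧ ¬ ∃ k, P k x) with hpdef
  have htot : ∀ x, ∃ n, p n x := by
    intro x
    by_cases h : ∃ k, P k x
    · obtain ⟨k, hk⟩ := h
      exact ⟨k, Or.inl hk⟩
    · exact ⟨0, Or.inr ⟨rfl, h⟩⟩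
  have hPmeas : ∀ n, MeasurableSet {x | P n x} := by
    intro n
    have h1 : {x | F x (e n) = m x} = {x | F x (e n) ≤ m x} ∩ {x | m x ≤ F x (e n)} := by
      ext x
      simp only [Set.mem_setOf_eq, Set.mem_inter_iff]
      exact ⟨fun h => ⟨le_of_eq h, ge_of_eq h⟩, fun ⟨h1, h2⟩ => le_antisymm h1 h2⟩
    have h2 : MeasurableSet {x | F x (e n) = m x} := by
      rw [h1]
      exact (measurableSet_le (hFmeas (e n)) hmmeas).inter
        (measurableSet_le hmmeas (hFmeas (e n)))
    have h3 : MeasurableSet {x | m x ≠ ∞} := (hmmeas (measurableSet_singleton ∞)).compl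
    exact h2.inter h3
  have hpmeas : ∀ n, MeasurableSet {x | p n x} := by
    intro n
    have : {x | p n x} = {x | P n x} ∪ ({x : X | n = 0} ∩ (⋃ k, {x | P k x})ᶜ) := by
      ext x
      simp only [hpdef, Set.mem_setOf_eq, Set.mem_union, Set.mem_inter_iff,
        Set.mem_compl_iff, Set.mem_iUnion]
    rw [this]
    exact (hPmeas n).union ((MeasurableSet.const _).inter
      (MeasurableSet.iUnion hPmeas).compl)
  -- the selection map
  set π : X → X := fun x => e (Nat.find (htot x)) • x with hπdef
  have hπmeas : Measurable π := Measurable.find (fun n => hmeas (e n)) hpmeas htot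
  have hπspec : ∀ x : X, (∃ n, P n x) →
      F x (e (Nat.find (htot x))) = m x ∧ m x ≠ ∞ := by
    intro x hex
    rcases Nat.find_spec (htot x) with h | h
    · exact h
    · exact absurd hex h.2
  have hexP : ∀ x ∈ Ω, x ∈ A → ∃ n, P n x := by
    intro x hx hxA
    obtain ⟨hne, hfin⟩ := (hΩgood x hx).2.2.2 hxA
    obtain ⟨g₀, hg₀S, hFg₀, hmtop⟩ := hatt x hne hfin
    obtain ⟨n, rfl⟩ := he g₀
    exact ⟨n, hFg₀, hmtop⟩
  -- pointwise invariance of π on Ω ∩ A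
  have hπinv : ∀ x ∈ Ω, x ∈ A → ∀ g : G, π (g • x) = π x := by
    intro x hx hxA g
    have hgx : g • x ∈ Ω := hΩinv g x hx
    have hgxA : g • x ∈ A := hAmem g x hxA
    obtain ⟨h1, h1top⟩ := hπspec x (hexP x hx hxA)
    obtain ⟨h2, h2top⟩ := hπspec (g • x) (hexP _ hgx hgxA)
    have h2' : F x (e (Nat.find (htot (g • x))) * g) = m x := by
      rw [← hF_cov x hx g, h2, hm_cov x hx g]
    have heq := huniq x (hΩgood x hx).1 _ _ h2' h1 h1top
    show e (Nat.find (htot (g • x))) • (g • x) = e (Nat.find (htot x)) • x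
    rw [← mul_smul, heq]
  -- the wandering set
  set W : Set X := Ω ∩ A ∩ {x | π x = x} with hWdef
  have hπfix_meas : MeasurableSet {x : X | π x = x} := by
    have h1 : {x : X | π x = x} = {x | f (π x) ≤ f x} ∩ {x | f x ≤ f (π x)} := by
      ext x
      simp only [Set.mem_setOf_eq, Set.mem_inter_iff]
      constructor
      · intro h; rw [h]; exact ⟨le_rfl, le_rfl⟩
      · intro ⟨ha, hb⟩; exact hf.injective (le_antisymm ha hb)
    rw [h1]
    exact (measurableSet_le (hf.measurable.comp hπmeas) hf.measurable).inter
      (measurableSet_le hf.measurable (hf.measurable.comp hπmeas))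
  have hWmeas : MeasurableSet W := (hΩmeas.inter hA).inter hπfix_meas
  refine ⟨⟨π, hπmeas, ?_, ?_⟩, ⟨W, hWmeas, ?_, ?_⟩⟩
  · -- a.e. invariance
    intro g
    filter_upwards [hΩae] with x hx hxA
    exact hπinv x hx hxA g
  · -- π x in the orbit
    filter_upwards [] with x hxA
    exact MulAction.mem_orbit x _
  · -- translates of W are disjoint
    intro g h hgh
    have hempty : (g • W) ∩ (h • W) = ∅ := by
      ext y
      simp only [Set.mem_inter_iff, Set.mem_empty_iff_false, iff_false, not_and]
      rintro ⟨w, hw, rfl⟩ ⟨w', hw', heq⟩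
      obtain ⟨⟨hwΩ, hwA⟩, hwfix⟩ := hw
      obtain ⟨⟨hw'Ω, hw'A⟩, hw'fix⟩ := hw'
      have heq' : h • w' = g • w := heq
      have hw'eq : w' = (h⁻¹ * g) • w := by
        rw [mul_smul, ← heq', inv_smul_smul]
      have hπw' : π w' = π w := by
        rw [hw'eq]
        exact hπinv w hwΩ hwA (h⁻¹ * g)
      have hww : w' = w := by
        rw [← hw'fix, hπw', hwfix]
      have h3 : (h⁻¹ * g) • w = w := by rw [← hw'eq]; exact hww
      have h4 := (hΩgood w hwΩ).1 _ h3
      exact hgh (inv_mul_eq_one.mp h4).symm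
    rw [hempty]
    exact measure_empty
  · -- A is a.e. covered by translates of W
    refine measure_mono_null ?_ hΩnull
    intro x hx
    simp only [Set.mem_diff, Set.mem_iUnion] at hx
    obtain ⟨hxA, hxU⟩ := hx
    by_contra hxΩ
    simp only [Set.mem_compl_iff, not_not] at hxΩ
    refine hxU ?_
    set g₀ : G := e (Nat.find (htot x)) with hg₀def
    have hπx : π x = g₀ • x := rfl
    have hπxΩ : π x ∈ Ω := by rw [hπx]; exact hΩinv g₀ x hxΩ
    have hπxA : π x ∈ A := by rw [hπx]; exact hAmem g₀ x hxA
    have hπfix : π (π x) = π x := by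
      rw [hπx]
      exact hπinv x hxΩ hxA g₀
    have hπW : π x ∈ W := ⟨⟨hπxΩ, hπxA⟩, hπfix⟩
    refine ⟨g₀⁻¹, π x, hπW, ?_⟩
    show g₀⁻¹ • π x = x
    rw [hπx]
    exact inv_smul_smul g₀ x
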